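/- Fix an integer q ≥ 2 and an integer n ≥ 1. For each i ∈ {1,…,n}, let f_i(0), …, f_i(q−1) be nonnegative real numbers with Σ_{k=0}^{q−1} f_i(k) = 1, and set x_i = Σ_{k=1}^{q−1} f_i(k). Define V = Σ_{i=1}^{n} ( Σ_{k=0}^{q−1} f_i(k)² + 2 Σ_{0≤k<ℓ≤q−1} f_i(k) f_i(ℓ) cos(2π(k−ℓ)/q) − 2 Σ_{k=0}^{q−1} f_i(k) cos(2πk/q) + 1 ). Then V ≤ 4 Σ_{i=1}^{n} x_i². -/

import Mathlib

open Finset Real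

private lemma sum_sq_split (q : ℕ) (F : ℕ → ℕ → ℝ) (hsymm : ∀ k l, F k l = F l k) :
    ∑ k ∈ Finset.range q, ∑ l ∈ Finset.range q, F k l
      = ∑ k ∈ Finset.range q, F k k
        + 2 * ∑ l ∈ Finset.range q, ∑ k ∈ Finset.range l, F k l := by
  induction q with
  | zero => simp
  | succ q ih =>
    have h1 : ∑ l ∈ Finset.range q, F q l = ∑ k ∈ Finset.range q, F k q :=
      Finset.sum_congr rfl fun k _ => hsymm q k
    simp only [Finset.sum_range_succ, Finset.sum_add_distrib, ih, h1]
    ring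

private lemma key (q : ℕ) (hq : 2 ≤ q) (g : ℕ → ℝ)
    (h0 : ∀ k < q, 0 ≤ g k) (h1 : ∑ k ∈ Finset.range q, g k = 1) :
    ∑ k ∈ Finset.range q, g k ^ 2
      + 2 * ∑ l ∈ Finset.range q, ∑ k ∈ Finset.range l,
          g k * g l * Real.cos (2 * π * ((k : ℝ) - l) / q)
      - 2 * ∑ k ∈ Finset.range q, g k * Real.cos (2 * π * k / q) + 1
    ≤ 4 * (∑ k ∈ Finset.Ico 1 q, g k) ^ 2 := by
  have hq0 : (0:ℕ) < q := by omega
  set θ : ℕ → ℝ := fun k => 2 * π * k / q with hθ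
  set C1 : ℝ := ∑ k ∈ Finset.range q, g k * Real.cos (θ k) with hC1
  set S1 : ℝ := ∑ k ∈ Finset.range q, g k * Real.sin (θ k) with hS1
  set x : ℝ := ∑ k ∈ Finset.Ico 1 q, g k with hxdef
  -- Step C: the term equals (C1 - 1)^2 + S1^2
  have hsplit := sum_sq_split q (fun k l => g k * g l * Real.cos (θ k - θ l))
    (by intro k l; rw [show θ l - θ k = -(θ k - θ l) by ring, Real.cos_neg]; ring)
  have hdiag : ∑ k ∈ Finset.range q, (fun k l => g k * g l * Real.cos (θ k - θ l)) k k
      = ∑ k ∈ Finset.range q, g k ^ 2 := by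
    refine Finset.sum_congr rfl fun k _ => ?_
    simp [sub_self]; ring
  have hD : ∑ l ∈ Finset.range q, ∑ k ∈ Finset.range l,
        (fun k l => g k * g l * Real.cos (θ k - θ l)) k l
      = ∑ l ∈ Finset.range q, ∑ k ∈ Finset.range l,
          g k * g l * Real.cos (2 * π * ((k : ℝ) - l) / q) := by
    refine Finset.sum_congr rfl fun l _ => Finset.sum_congr rfl fun k _ => ?_
    congr 1
    rw [hθ]
    ring
  have hfull : ∑ k ∈ Finset.range q, ∑ l ∈ Finset.range q,
        g k * g l * Real.cos (θ k - θ l) = C1 ^ 2 + S1 ^ 2 := by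
    have : ∀ k l : ℕ, g k * g l * Real.cos (θ k - θ l)
        = (g k * Real.cos (θ k)) * (g l * Real.cos (θ l))
          + (g k * Real.sin (θ k)) * (g l * Real.sin (θ l)) := by
      intro k l
      rw [Real.cos_sub]; ring
    simp only [this, Finset.sum_add_distrib, ← Finset.mul_sum, ← Finset.sum_mul]
    rw [hC1, hS1]; ring
  -- term = (C1-1)^2 + S1^2
  have hterm : ∑ k ∈ Finset.range q, g k ^ 2
      + 2 * ∑ l ∈ Finset.range q, ∑ k ∈ Finset.range l,
          g k * g l * Real.cos (2 * π * ((k : ℝ) - l) / q)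
      - 2 * ∑ k ∈ Finset.range q, g k * Real.cos (2 * π * k / q) + 1
      = (C1 - 1) ^ 2 + S1 ^ 2 := by
    have hc : ∑ k ∈ Finset.range q, g k * Real.cos (2 * π * k / q) = C1 := rfl
    rw [hc]
    have := hsplit
    rw [hdiag, hD, hfull] at this
    nlinarith [this]
  rw [hterm]
  -- now the complex vector
  set c : ℂ := ∑ k ∈ Finset.Ico 1 q, (g k : ℂ) * (Complex.exp (θ k * Complex.I) - 1) with hc
  have hre : c.re = C1 - 1 := by
    rw [hc, Complex.re_sum]
    have : ∀ k ∈ Finset.Ico 1 q, ((g k : ℂ) * (Complex.exp (θ k * Complex.I) - 1)).re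
        = g k * Real.cos (θ k) - g k := by
      intro k _
      simp [Complex.mul_re, Complex.sub_re, Complex.exp_ofReal_mul_I_re, Complex.one_re]
      ring
    rw [Finset.sum_congr rfl this, Finset.sum_sub_distrib]
    have h0q : ∑ k ∈ Finset.range q, g k * Real.cos (θ k)
        = g 0 * Real.cos (θ 0) + ∑ k ∈ Finset.Ico 1 q, g k * Real.cos (θ k) := by
      rw [Finset.range_eq_Ico, Finset.sum_eq_sum_Ico_succ_bot hq0]
    have h0g : ∑ k ∈ Finset.range q, g k = g 0 + ∑ k ∈ Finset.Ico 1 q, g k := by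
      rw [Finset.range_eq_Ico, Finset.sum_eq_sum_Ico_succ_bot hq0]
    have hθ0 : θ 0 = 0 := by simp [hθ]
    rw [h0g] at h1
    rw [hC1, h0q, hθ0, Real.cos_zero]
    linarith
  have him : c.im = S1 := by
    rw [hc, Complex.im_sum]
    have : ∀ k ∈ Finset.Ico 1 q, ((g k : ℂ) * (Complex.exp (θ k * Complex.I) - 1)).im
        = g k * Real.sin (θ k) := by
      intro k _
      simp [Complex.mul_im, Complex.sub_im, Complex.exp_ofReal_mul_I_im, Complex.one_im]
    rw [Finset.sum_congr rfl this]
    have h0q : ∑ k ∈ Finset.range q, g k * Real.sin (θ k)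
        = g 0 * Real.sin (θ 0) + ∑ k ∈ Finset.Ico 1 q, g k * Real.sin (θ k) := by
      rw [Finset.range_eq_Ico, Finset.sum_eq_sum_Ico_succ_bot hq0]
    have hθ0 : θ 0 = 0 := by simp [hθ]
    rw [hS1, h0q, hθ0, Real.sin_zero]
    ring
  -- abs c ≤ 2x
  have habs : ‖c‖ ≤ 2 * x := by
    calc ‖c‖ ≤ ∑ k ∈ Finset.Ico 1 q,
          ‖(g k : ℂ) * (Complex.exp (θ k * Complex.I) - 1)‖ := by
          rw [hc]; exact norm_sum_le _ _
      _ ≤ ∑ k ∈ Finset.Ico 1 q, g k * 2 := by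
          refine Finset.sum_le_sum fun k hk => ?_
          have hk' := Finset.mem_Ico.mp hk
          have hgk : 0 ≤ g k := h0 k hk'.2
          rw [norm_mul, Complex.norm_of_nonneg hgk]
          refine mul_le_mul_of_nonneg_left ?_ hgk
          calc ‖Complex.exp (θ k * Complex.I) - 1‖
              = ‖Complex.exp (θ k * Complex.I) - 1‖ := rfl
            _ ≤ ‖Complex.exp (θ k * Complex.I)‖ + ‖(1:ℂ)‖ := norm_sub_le _ _
            _ = 2 := by
                rw [Complex.norm_exp_ofReal_mul_I, norm_one]; norm_num
      _ = 2 * x := by rw [hxdef, ← Finset.sum_mul]; ring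
  have hx0 : 0 ≤ x := Finset.sum_nonneg fun k hk => h0 k (Finset.mem_Ico.mp hk).2
  have hnsq : (C1 - 1) ^ 2 + S1 ^ 2 = ‖c‖ ^ 2 := by
    rw [Complex.sq_norm, Complex.normSq_apply, hre, him]; ring
  rw [hnsq]
  have : ‖c‖ ^ 2 ≤ (2 * x) ^ 2 :=
    pow_le_pow_left₀ (norm_nonneg c) habs 2
  nlinarith [this]

theorem V_upper_bound {q n : ℕ} (hq : 2 ≤ q) (hn : 1 ≤ n)
    (f : Fin n → ℕ → ℝ)
    (hf0 : ∀ i, ∀ k < q, 0 ≤ f i k)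
    (hf1 : ∀ i, ∑ k ∈ Finset.range q, f i k = 1)
    (x : Fin n → ℝ)
    (hx : ∀ i, x i = ∑ k ∈ Finset.Ico 1 q, f i k)
    (V : ℝ)
    (hV : V = ∑ i, (∑ k ∈ Finset.range q, (f i k) ^ 2
        + 2 * ∑ l ∈ Finset.range q, ∑ k ∈ Finset.range l,
            f i k * f i l * Real.cos (2 * π * ((k : ℝ) - l) / q)
        - 2 * ∑ k ∈ Finset.range q, f i k * Real.cos (2 * π * k / q) + 1)) :
    V ≤ 4 * ∑ i, (x i) ^ 2 := by
  rw [hV, Finset.mul_sum]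
  refine Finset.sum_le_sum fun i _ => ?_
  rw [hx i]
  exact key q hq (f i) (hf0 i) (hf1 i)
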